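/- Let A be a real super division algebra with even part ℍ and e a nonzero odd element. Then there exists a nonzero odd element e' ∈ A₁ that commutes with every element of A₀. -/

import Mathlib

private lemma inv_mem_aux {A : Type*} [Ring A] [Algebra ℝ A] [FiniteDimensional ℝ A]
    (A₀ : Subalgebra ℝ A) (x : Aˣ) (hx : (x : A) ∈ A₀) : ((x⁻¹ : Aˣ) : A) ∈ A₀ := by
  let L : A₀ →ₗ[ℝ] A₀ :=
    { toFun := fun a => ⟨(x : A) * a, A₀.mul_mem hx a.2⟩
      map_add' := by intro a b; ext; simp [mul_add]
      map_smul' := by intro r a; ext; simp [mul_smul_comm] }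
  have hinj : Function.Injective L := by
    intro a b hab
    have h1 : (x : A) * a = (x : A) * b := congrArg Subtype.val hab
    have h2 := congrArg (fun y => ((x⁻¹ : Aˣ) : A) * y) h1
    simp only [← mul_assoc, Units.inv_mul, one_mul] at h2
    exact Subtype.ext h2
  have hsurj : Function.Surjective L := (LinearMap.injective_iff_surjective).mp hinj
  obtain ⟨a, ha⟩ := hsurj 1
  have ha' : (x : A) * a = 1 := congrArg Subtype.val ha
  have : ((x⁻¹ : Aˣ) : A) = a := by
    calc ((x⁻¹ : Aˣ) : A) = ((x⁻¹ : Aˣ) : A) * ((x : A) * a) := by rw [ha', mul_one]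
    _ = a := by rw [← mul_assoc, Units.inv_mul, one_mul]
  rw [this]; exact a.2

private lemma quat_conj_aux (σ : Quaternion ℝ →ₐ[ℝ] Quaternion ℝ) :
    ∃ q : Quaternion ℝ, q ≠ 0 ∧ ∀ x, σ x * q = q * x := by
  set I : Quaternion ℝ := ⟨0,1,0,0⟩ with hIdef
  set J : Quaternion ℝ := ⟨0,0,1,0⟩ with hJdef
  set K : Quaternion ℝ := ⟨0,0,0,1⟩ with hKdef
  have hII : I * I = -1 := by rw [hIdef, Quaternion.ext_iff]; erw [Quaternion.re_mul, Quaternion.imI_mul, Quaternion.imJ_mul, Quaternion.imK_mul]; simp [Quaternion.re_one, Quaternion.imI_one, Quaternion.imJ_one, Quaternion.imK_one]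
  have hJJ : J * J = -1 := by rw [hJdef, Quaternion.ext_iff]; erw [Quaternion.re_mul, Quaternion.imI_mul, Quaternion.imJ_mul, Quaternion.imK_mul]; simp [Quaternion.re_one, Quaternion.imI_one, Quaternion.imJ_one, Quaternion.imK_one]
  have hIJ : I * J = K := by rw [Quaternion.ext_iff, hIdef, hJdef, hKdef]; erw [Quaternion.re_mul, Quaternion.imI_mul, Quaternion.imJ_mul, Quaternion.imK_mul]; simp
  have hJI : J * I = -(I * J) := by rw [hIdef, hJdef, Quaternion.ext_iff]; erw [Quaternion.re_mul, Quaternion.imI_mul, Quaternion.imJ_mul, Quaternion.imK_mul, Quaternion.re_neg, Quaternion.imI_neg, Quaternion.imJ_neg, Quaternion.imK_neg, Quaternion.re_mul, Quaternion.imI_mul, Quaternion.imJ_mul, Quaternion.imK_mul]; simp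
  set u : Quaternion ℝ := σ I with hudef
  set v : Quaternion ℝ := σ J with hvdef
  have hu2 : u * u = -1 := by rw [hudef, ← map_mul, hII, map_neg, map_one]
  have hv2 : v * v = -1 := by rw [hvdef, ← map_mul, hJJ, map_neg, map_one]
  have hvu : v * u = -(u * v) := by
    rw [hudef, hvdef, ← map_mul, ← map_mul, hJI, map_neg]
  have huv : u * v = -(v * u) := by rw [hvu, neg_neg]
  have huvX : ∀ x, u * (v * x) = -(v * (u * x)) := fun x => by
    rw [← mul_assoc, huv, neg_mul, mul_assoc]
  have hJIX : ∀ x, J * (I * x) = -(I * (J * x)) := fun x => by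
    rw [← mul_assoc, hJI, neg_mul, mul_assoc]
  have hvvX : ∀ x, v * (v * x) = -x := fun x => by
    rw [← mul_assoc, hv2, neg_one_mul]
  -- Step 1: find q₁ ≠ 0 with u * q₁ = q₁ * I
  obtain ⟨q₁, hq₁0, hq₁⟩ : ∃ q₁ : Quaternion ℝ, q₁ ≠ 0 ∧ u * q₁ = q₁ * I := by
    by_cases h : (1 : Quaternion ℝ) - u * I = 0
    · have h1 : u * I = 1 := by rw [sub_eq_zero] at h; exact h.symm
      have hu : u = -I := by
        have h2 := congrArg (· * I) h1
        simp only [mul_assoc, hII, mul_neg_one, one_mul] at h2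
        rw [← neg_neg u, h2]
      refine ⟨J, ?_, ?_⟩
      · intro hJ0
        have := congrArg QuaternionAlgebra.imJ hJ0
        rw [hJdef] at this
        simpa [Quaternion.imJ_zero] using this
      · rw [hu, neg_mul, hJI]
    · refine ⟨1 - u * I, h, ?_⟩
      have l1 : u * (1 - u * I) = u + I := by
        rw [mul_sub, mul_one, ← mul_assoc, hu2, neg_one_mul, sub_neg_eq_add]
      have l2 : (1 - u * I) * I = I + u := by
        rw [sub_mul, one_mul, mul_assoc, hII, mul_neg_one, sub_neg_eq_add]
      rw [l1, l2, add_comm]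
  have hq₁X : ∀ x, u * (q₁ * x) = q₁ * (I * x) := fun x => by
    rw [← mul_assoc, hq₁, mul_assoc]
  -- Step 2: find q ≠ 0 with u * q = q * I and v * q = q * J
  obtain ⟨q, hq0, hqI, hqJ⟩ :
      ∃ q : Quaternion ℝ, q ≠ 0 ∧ u * q = q * I ∧ v * q = q * J := by
    by_cases h : q₁ - v * q₁ * J = 0
    · -- degenerate case : take q = q₁ * I
      have h1 : v * q₁ * J = q₁ := by rw [sub_eq_zero] at h; exact h.symm
      have hvq : v * q₁ = -(q₁ * J) := by
        have h2 := congrArg (· * J) h1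
        simp only [mul_assoc, hJJ, mul_neg_one, mul_one, mul_neg] at h2
        rw [← neg_neg (v * q₁), h2]
      have hvqX : ∀ x, v * (q₁ * x) = -(q₁ * (J * x)) := fun x => by
        rw [← mul_assoc, hvq, neg_mul, mul_assoc]
      refine ⟨q₁ * I, ?_, ?_, ?_⟩
      · intro h0
        apply hq₁0
        have h2 := congrArg (· * I) h0
        simp only [mul_assoc, hII, mul_neg_one, zero_mul] at h2
        rw [← neg_neg q₁, h2, neg_zero]
      · rw [← mul_assoc, hq₁]
      · rw [hvqX, hJI, mul_neg, neg_neg, ← mul_assoc]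
    · refine ⟨q₁ - v * q₁ * J, h, ?_, ?_⟩
      · simp only [mul_sub, sub_mul, mul_assoc, hq₁X, huvX, hJIX, hq₁, hJI,
          mul_neg, neg_mul, neg_neg, sub_neg_eq_add]
      · simp only [mul_sub, sub_mul, mul_assoc, hvvX, hJJ, mul_neg_one, mul_one,
          mul_neg, neg_mul, neg_neg, sub_neg_eq_add]
        abel
  -- Step 3: conclude
  have hqK : (u * v) * q = q * K := by
    rw [mul_assoc, hqJ, ← mul_assoc, hqI, mul_assoc, hIJ]
  refine ⟨q, hq0, fun x => ?_⟩
  have hx : x = (algebraMap ℝ (Quaternion ℝ) x.re) + x.imI • I + x.imJ • J + x.imK • K := by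
    rw [hIdef, hJdef, hKdef, Quaternion.ext_iff]
    erw [Quaternion.re_add, Quaternion.re_add, Quaternion.re_add, Quaternion.imI_add, Quaternion.imI_add, Quaternion.imI_add, Quaternion.imJ_add, Quaternion.imJ_add, Quaternion.imJ_add, Quaternion.imK_add, Quaternion.imK_add, Quaternion.imK_add, Quaternion.re_smul, Quaternion.re_smul, Quaternion.re_smul, Quaternion.imI_smul, Quaternion.imI_smul, Quaternion.imI_smul, Quaternion.imJ_smul, Quaternion.imJ_smul, Quaternion.imJ_smul, Quaternion.imK_smul, Quaternion.imK_smul, Quaternion.imK_smul]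
    simp
  have hσx : σ x = algebraMap ℝ (Quaternion ℝ) x.re + x.imI • u + x.imJ • v + x.imK • (u * v) := by
    conv_lhs => rw [hx]
    rw [map_add, map_add, map_add, map_smul, map_smul, map_smul, AlgHom.commutes,
      ← hIJ, map_mul, ← hudef, ← hvdef]
  rw [hσx]
  conv_rhs => rw [hx]
  rw [add_mul, add_mul, add_mul, mul_add, mul_add, mul_add,
    smul_mul_assoc, smul_mul_assoc, smul_mul_assoc,
    mul_smul_comm, mul_smul_comm, mul_smul_comm,
    hqI, hqJ, hqK, Algebra.commutes]

/-- If A₀ ≅ ℍ and A has a nonzero odd element, then A has a nonzero odd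
element commuting with every even element. -/
theorem stmt_12 {A : Type*} [Ring A] [Algebra ℝ A] [FiniteDimensional ℝ A]
    (A₀ : Subalgebra ℝ A) (A₁ : Submodule ℝ A)
    (hcompl : IsCompl (Subalgebra.toSubmodule A₀) A₁)
    (h01 : ∀ a ∈ A₀, ∀ b ∈ A₁, a * b ∈ A₁)
    (h10 : ∀ a ∈ A₁, ∀ b ∈ A₀, a * b ∈ A₁)
    (h11 : ∀ a ∈ A₁, ∀ b ∈ A₁, a * b ∈ A₀)
    (hdiv : ∀ a : A, (a ∈ A₀ ∨ a ∈ A₁) → a ≠ 0 → IsUnit a)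
    (φ : A₀ ≃ₐ[ℝ] Quaternion ℝ)
    (e : A) (he : e ∈ A₁) (he0 : e ≠ 0) :
    ∃ e' ∈ A₁, e' ≠ 0 ∧ ∀ a ∈ A₀, e' * a = a * e' := by
  obtain ⟨uE, huE⟩ := hdiv e (Or.inr he) he0
  set einv : A := ((uE⁻¹ : Aˣ) : A) with heinvdef
  have hei : e * einv = 1 := by rw [heinvdef, ← huE]; exact uE.mul_inv
  have hie : einv * e = 1 := by rw [heinvdef, ← huE]; exact uE.inv_mul
  have hieX : ∀ x : A, einv * (e * x) = x := fun x => by rw [← mul_assoc, hie, one_mul]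
  -- e⁻¹ is odd
  have he2 : e * e ∈ A₀ := h11 e he e he
  have he2ne : e * e ≠ 0 := by
    intro h0
    apply he0
    have := congrArg (fun y => einv * y) h0
    simpa [hieX] using this
  obtain ⟨u2, hu2⟩ := hdiv (e * e) (Or.inl he2) he2ne
  have hs : ((u2⁻¹ : Aˣ) : A) ∈ A₀ := inv_mem_aux A₀ u2 (by rw [hu2]; exact he2)
  have heinv : einv ∈ A₁ := by
    have h3 : ((u2⁻¹ : Aˣ) : A) * e ∈ A₁ := h01 _ hs e he
    have h4 : ((u2⁻¹ : Aˣ) : A) * e = einv := by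
      calc ((u2⁻¹ : Aˣ) : A) * e
          = ((u2⁻¹ : Aˣ) : A) * e * (e * einv) := by rw [hei, mul_one]
        _ = ((u2⁻¹ : Aˣ) : A) * (e * e) * einv := by
            rw [mul_assoc, mul_assoc, mul_assoc]
        _ = einv := by rw [← hu2, u2.inv_mul, one_mul]
    rwa [h4] at h3
  -- the conjugation algebra endomorphism of A₀
  have hconj_mem : ∀ a : A, a ∈ A₀ → e * a * einv ∈ A₀ := fun a ha =>
    h11 _ (h10 e he a ha) _ heinv
  let c : A₀ →ₐ[ℝ] A₀ :=
    { toFun := fun a => ⟨e * (a : A) * einv, hconj_mem a a.2⟩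
      map_one' := by
        ext
        show e * ((1 : A₀) : A) * einv = ((1 : A₀) : A)
        rw [OneMemClass.coe_one, mul_one, hei]
      map_mul' := fun a b => by
        ext
        show e * ((a * b : A₀) : A) * einv = (e * (a : A) * einv) * (e * (b : A) * einv)
        rw [MulMemClass.coe_mul]
        simp only [mul_assoc, hieX]
      map_zero' := by
        ext
        show e * ((0 : A₀) : A) * einv = ((0 : A₀) : A)
        rw [ZeroMemClass.coe_zero, mul_zero, zero_mul]
      map_add' := fun a b => by
        ext
        show e * ((a + b : A₀) : A) * einv = (e * (a : A) * einv) + (e * (b : A) * einv)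
        rw [AddMemClass.coe_add, mul_add, add_mul]
      commutes' := fun r => by
        ext
        show e * ((algebraMap ℝ A₀ r : A₀) : A) * einv = ((algebraMap ℝ A₀ r : A₀) : A)
        rw [Subalgebra.coe_algebraMap, Algebra.algebraMap_eq_smul_one, mul_smul_comm,
          smul_mul_assoc, mul_one, hei] }
  let σ : Quaternion ℝ →ₐ[ℝ] Quaternion ℝ := (φ.toAlgHom.comp c).comp φ.symm.toAlgHom
  obtain ⟨q, hq0, hq⟩ := quat_conj_aux σ
  set q₀ : A₀ := φ.symm q with hq₀def
  have hq₀0 : (q₀ : A) ≠ 0 := by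
    intro h0
    apply hq0
    have h1 : q₀ = 0 := by exact_mod_cast Subtype.ext h0
    have h2 : φ q₀ = q := by rw [hq₀def, AlgEquiv.apply_symm_apply]
    rw [← h2, h1, map_zero]
  have key : ∀ a : A₀, (e * (a : A) * einv) * (q₀ : A) = (q₀ : A) * (a : A) := by
    intro a
    have h1 := hq (φ a)
    have h2 : σ (φ a) = φ (c a) := by
      show φ.toAlgHom (c (φ.symm (φ a))) = φ (c a)
      rw [AlgEquiv.symm_apply_apply]
      rfl
    rw [h2, show q = φ q₀ by rw [hq₀def, AlgEquiv.apply_symm_apply]] at h1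
    rw [← map_mul, ← map_mul] at h1
    have h3 : c a * q₀ = q₀ * a := φ.injective h1
    have h4 := congrArg (Subtype.val) h3
    rw [MulMemClass.coe_mul, MulMemClass.coe_mul] at h4
    exact h4
  -- q₀ is a unit; e' := q₀⁻¹ * e
  obtain ⟨w, hw⟩ := hdiv (q₀ : A) (Or.inl q₀.2) hq₀0
  have hwinv : ((w⁻¹ : Aˣ) : A) ∈ A₀ := inv_mem_aux A₀ w (by rw [hw]; exact q₀.2)
  refine ⟨((w⁻¹ : Aˣ) : A) * e, h01 _ hwinv e he, ?_, ?_⟩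
  · intro h0
    apply he0
    have := congrArg (fun y => (w : A) * y) h0
    simpa [← mul_assoc, w.mul_inv] using this
  · intro a ha
    have k1 : e * a * einv * (w : A) = (w : A) * a := by
      have := key ⟨a, ha⟩
      rw [← hw] at this
      exact this
    have k2 : e * a * einv = (w : A) * a * ((w⁻¹ : Aˣ) : A) := by
      calc e * a * einv
          = (e * a * einv * (w : A)) * ((w⁻¹ : Aˣ) : A) := by
            rw [mul_assoc (e * a * einv) ((w : A)), w.mul_inv, mul_one]
        _ = (w : A) * a * ((w⁻¹ : Aˣ) : A) := by rw [k1]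
    calc ((w⁻¹ : Aˣ) : A) * e * a
        = ((w⁻¹ : Aˣ) : A) * ((e * a * einv) * e) := by
          rw [mul_assoc (e * a), hie, mul_one, mul_assoc]
      _ = ((w⁻¹ : Aˣ) : A) * (((w : A) * a * ((w⁻¹ : Aˣ) : A)) * e) := by rw [k2]
      _ = a * (((w⁻¹ : Aˣ) : A) * e) := by
          simp only [← mul_assoc]
          rw [w.inv_mul, one_mul]
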